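/- (Path similarity bound theorem) If p = p̃_{s,v,t} is a cascading via-path and q is an s–t path with c(q) < c(p), then the Jaccard distance between their vertex sets satisfies δ(p,q) ≥ ω(p), where ω(p) is the via-node fraction of p. -/

import Mathlib

variable {V : Type*}

/-- `p` is a path from `u` to `w` in the digraph with edge relation `E`:
a nonempty finite sequence of vertices beginning at `u` and ending at `w`
in which every consecutive pair of vertices is an edge. -/
def IsPath (E : V → V → Prop) (p : List V) (u w : V) : Prop :=
  p ≠ [] ∧ p.head? = some u ∧ p.getLast? = some w ∧ p.Chain' E

/-- The cost of a path: the sum of the weights of its edges. -/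
def pathCost (c : V → V → ℝ) (p : List V) : ℝ :=
  ((p.zip p.tail).map fun e => c e.1 e.2).sum

/-- A shortest path from `u` to `w`: a path from `u` to `w` of minimum cost. -/
def IsShortestPath (E : V → V → Prop) (c : V → V → ℝ) (p : List V) (u w : V) : Prop :=
  IsPath E p u w ∧ ∀ q, IsPath E q u w → pathCost c p ≤ pathCost c q

/-- A via-path for `v`: an `s`–`t` path of minimum cost among all `s`–`t`
paths passing through `v`. -/
def IsViaPath (E : V → V → Prop) (c : V → V → ℝ) (s t v : V) (p : List V) : Prop :=
  IsPath E p s t ∧ v ∈ p ∧ ∀ q, IsPath E q s t → v ∈ q → pathCost c p ≤ pathCost c q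

/-- The minimum cost of an `s`–`t` path passing through `v`. -/
noncomputable def viaCost (E : V → V → Prop) (c : V → V → ℝ) (s t v : V) : ℝ :=
  sInf (pathCost c '' {p | IsPath E p s t ∧ v ∈ p})

/-- A predecessor shortest path tree rooted at the source `s`: a map `b`
assigning to each vertex `v ≠ s` a vertex `b v` with an edge from `b v` to `v`,
such that iterating `b` from any `v` terminates at `s` and the resulting path
`pathTo v` (read from `s` to `v`) is a shortest path from `s` to `v`. -/
structure PredSPT (E : V → V → Prop) (c : V → V → ℝ) (s : V) where
  b : V → V
  pathTo : V → List V
  edge : ∀ v, v ≠ s → E (b v) v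
  pathTo_src : pathTo s = [s]
  pathTo_step : ∀ v, v ≠ s → pathTo v = pathTo (b v) ++ [v]
  shortest : ∀ v, IsShortestPath E c (pathTo v) s v

/-- A successor shortest path tree rooted at the target `t`: a map `f`
assigning to each vertex `v ≠ t` a vertex `f v` with an edge from `v` to `f v`,
such that iterating `f` from any `v` terminates at `t` and the resulting path
`pathFrom v` is a shortest path from `v` to `t`. -/
structure SuccSPT (E : V → V → Prop) (c : V → V → ℝ) (t : V) where
  f : V → V
  pathFrom : V → List V
  edge : ∀ v, v ≠ t → E v (f v)
  pathFrom_tgt : pathFrom t = [t]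
  pathFrom_step : ∀ v, v ≠ t → pathFrom v = v :: pathFrom (f v)
  shortest : ∀ v, IsShortestPath E c (pathFrom v) v t

variable {E : V → V → Prop} {c : V → V → ℝ} {s t : V}

/-- The cascading via-path (CVP) of a vertex `v`: the tree path `p̃_{s,v}`
followed by the tree path `p̃_{v,t}`. -/
def CVP (B : PredSPT E c s) (F : SuccSPT E c t) (v : V) : List V :=
  B.pathTo v ++ (F.pathFrom v).tail

/-- A reciprocal pointer chain (RPC): a nonempty sequence of vertices
`(v_1, …, v_n)` such that for all `1 ≤ i < n`, `b (v_{i+1}) = v_i` and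
`f (v_i) = v_{i+1}` (as pointers of the two shortest path trees, so in
particular `v_{i+1} ≠ s` and `v_i ≠ t`). -/
def IsRPC (B : PredSPT E c s) (F : SuccSPT E c t) (r : List V) : Prop :=
  r ≠ [] ∧ r.Chain' fun x y => y ≠ s ∧ x ≠ t ∧ B.b y = x ∧ F.f x = y

/-- A maximal RPC: an RPC whose set of vertices is not a (strict) subset of the
vertex set of any other RPC. -/
def IsMaximalRPC [DecidableEq V] (B : PredSPT E c s) (F : SuccSPT E c t)
    (r : List V) : Prop :=
  IsRPC B F r ∧
    ∀ r', IsRPC B F r' → r.toFinset ⊆ r'.toFinset → r'.toFinset = r.toFinset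

/-- The Jaccard distance between the vertex sets of two paths. -/
noncomputable def jaccardDist [DecidableEq V] (p q : List V) : ℝ :=
  1 - ((p.toFinset ∩ q.toFinset).card : ℝ) / ((p.toFinset ∪ q.toFinset).card : ℝ)

/-- A plateau: a nonempty sequence of vertices in which every consecutive pair
is an edge and all vertices have the same minimum via-path cost. -/
def IsPlateau (E : V → V → Prop) (c : V → V → ℝ) (s t : V) (q : List V) : Prop :=
  q ≠ [] ∧ q.Chain' fun x y => E x y ∧ viaCost E c s t x = viaCost E c s t y

/-- A maximal plateau: a plateau whose set of vertices is not a (strict) subset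
of the vertex set of any other plateau. -/
def IsMaximalPlateau [DecidableEq V] (E : V → V → Prop) (c : V → V → ℝ)
    (s t : V) (q : List V) : Prop :=
  IsPlateau E c s t q ∧
    ∀ q', IsPlateau E c s t q' → q.toFinset ⊆ q'.toFinset → q'.toFinset = q.toFinset


private lemma pathCost_singleton (c : V → V → ℝ) (a : V) : pathCost c [a] = 0 := by
  simp [pathCost]

private lemma pathCost_cons_cons (c : V → V → ℝ) (a b : V) (l : List V) :
    pathCost c (a :: b :: l) = c a b + pathCost c (b :: l) := by
  simp [pathCost]

private lemma pathCost_split (c : V → V → ℝ) (y : V) (ys : List V) :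
    ∀ xs : List V, pathCost c (xs ++ y :: ys) = pathCost c (xs ++ [y]) + pathCost c (y :: ys)
  | [] => by simp [pathCost_singleton]
  | [a] => by simp [pathCost_cons_cons, pathCost_singleton]
  | a :: b :: xs => by
      have ih := pathCost_split c y ys (b :: xs)
      simp only [List.cons_append, pathCost_cons_cons] at *
      rw [ih]; ring

private lemma chain'_eq_head {α β : Type*} (g : α → β) :
    ∀ (x : α) (l : List α), (x :: l).Chain' (fun a b => g a = g b) →
      ∀ a ∈ x :: l, g a = g x
  | x, [], _, a, ha => by
      rw [List.mem_singleton] at ha; rw [ha]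
  | x, y :: l, h, a, ha => by
      rw [List.Chain', List.isChain_cons_cons] at h
      rcases List.mem_cons.mp ha with rfl | ha'
      · rfl
      · exact (chain'_eq_head g y l h.2 a ha').trans h.1.symm

private lemma pathTo_eq_concat (B : PredSPT E c s) (w : V) :
    ∃ l, B.pathTo w = l ++ [w] := by
  obtain ⟨hne, -, hlast, -⟩ := (B.shortest w).1
  have h2 : (B.pathTo w).getLast hne = w := by
    rwa [List.getLast?_eq_getLast hne, Option.some_inj] at hlast
  refine ⟨(B.pathTo w).dropLast, ?_⟩
  conv_lhs => rw [← List.dropLast_append_getLast hne]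
  rw [h2]

private lemma pathFrom_eq_cons (F : SuccSPT E c t) (w : V) :
    F.pathFrom w = w :: (F.pathFrom w).tail := by
  obtain ⟨hne, hhead, -, -⟩ := (F.shortest w).1
  cases hl : F.pathFrom w with
  | nil => exact absurd hl hne
  | cons a l =>
    rw [hl] at hhead
    simp only [List.head?_cons, Option.some_inj] at hhead
    rw [hhead]; rfl

private lemma cvp_step (B : PredSPT E c s) (F : SuccSPT E c t) {x y : V}
    (hys : y ≠ s) (hxt : x ≠ t) (hb : B.b y = x) (hf : F.f x = y) :
    CVP B F x = CVP B F y := by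
  have hpf := pathFrom_eq_cons F y
  unfold CVP
  rw [F.pathFrom_step x hxt, hf, B.pathTo_step y hys, hb, hpf]
  simp

private lemma mem_cvp_self (B : PredSPT E c s) (F : SuccSPT E c t) (w : V) :
    w ∈ CVP B F w := by
  obtain ⟨l, hl⟩ := pathTo_eq_concat B w
  unfold CVP
  rw [hl]
  simp

private lemma pathCost_CVP (B : PredSPT E c s) (F : SuccSPT E c t) (w : V) :
    pathCost c (CVP B F w) = pathCost c (B.pathTo w) + pathCost c (F.pathFrom w) := by
  obtain ⟨l, hl⟩ := pathTo_eq_concat B w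
  have hpf := pathFrom_eq_cons F w
  unfold CVP
  rw [hl]
  conv_rhs => rw [hpf]
  rw [List.append_assoc, List.singleton_append, pathCost_split c w _ l]

private lemma cvp_cost_le_of_mem (B : PredSPT E c s) (F : SuccSPT E c t) {w : V} {q : List V}
    (hq : IsPath E q s t) (hw : w ∈ q) :
    pathCost c (CVP B F w) ≤ pathCost c q := by
  obtain ⟨a, b, rfl⟩ := List.append_of_mem hw
  obtain ⟨hne, hhead, hlast, hchain⟩ := hq
  have hsplit := List.isChain_split.mp hchain
  have h1 : IsPath E (a ++ [w]) s w := by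
    refine ⟨by simp, ?_, by simp [List.getLast?_concat], hsplit.1⟩
    cases a with
    | nil => simpa using hhead
    | cons x a' => simpa using hhead
  have h2 : IsPath E (w :: b) w t := by
    refine ⟨by simp, rfl, ?_, hsplit.2⟩
    rwa [List.getLast?_append_cons] at hlast
  have hB := (B.shortest w).2 _ h1
  have hF := (F.shortest w).2 _ h2
  rw [pathCost_CVP, pathCost_split c w b a]
  linarith

/-- Path similarity bound theorem: If `p = p̃_{s,v,t}` is a CVP
and `q` is an `s`–`t` path with `c(q) < c(p)`, then the Jaccard distance between
their vertex sets is at least the via-node fraction `ω(p) = |V(r_p)|/|V(p)|`,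
where `r_p` is the maximal RPC of the vertices whose CVP equals `p`. -/
theorem path_similarity_bound [Fintype V] [DecidableEq V]
    {E : V → V → Prop} {c : V → V → ℝ} {s t : V}
    (hc : ∀ u w, E u w → 0 ≤ c u w)
    (B : PredSPT E c s) (F : SuccSPT E c t)
    (v : V) (r : List V) (hr : IsMaximalRPC B F r) (hvr : v ∈ r)
    (q : List V) (hq : IsPath E q s t)
    (hlt : pathCost c q < pathCost c (CVP B F v)) :
    jaccardDist (CVP B F v) q ≥
      (r.toFinset.card : ℝ) / ((CVP B F v).toFinset.card : ℝ) := by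
  obtain ⟨⟨hrne, hrchain⟩, -⟩ := hr
  have hch : r.Chain' (fun a b => CVP B F a = CVP B F b) :=
    hrchain.imp (fun {a b} h => cvp_step B F h.1 h.2.1 h.2.2.1 h.2.2.2)
  have hconst : ∀ w ∈ r, CVP B F w = CVP B F v := by
    cases r with
    | nil => exact absurd rfl hrne
    | cons x l =>
      intro w hw
      exact (chain'_eq_head _ x l hch w hw).trans
        (chain'_eq_head _ x l hch v hvr).symm
  set p := CVP B F v with hp
  have hRP : r.toFinset ⊆ p.toFinset := by
    intro w hw
    rw [List.mem_toFinset] at hw ⊢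
    rw [← hconst w hw]
    exact mem_cvp_self B F w
  have hdisj : ∀ w ∈ r.toFinset, w ∉ q.toFinset := by
    intro w hw hwq
    rw [List.mem_toFinset] at hw hwq
    have h1 := cvp_cost_le_of_mem B F hq hwq
    rw [hconst w hw] at h1
    linarith
  have hsub : p.toFinset ∩ q.toFinset ⊆ p.toFinset \ r.toFinset := by
    intro x hx
    rw [Finset.mem_inter] at hx
    rw [Finset.mem_sdiff]
    exact ⟨hx.1, fun hxR => hdisj x hxR hx.2⟩
  have hcard1 : (p.toFinset ∩ q.toFinset).card ≤ p.toFinset.card - r.toFinset.card :=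
    (Finset.card_le_card hsub).trans_eq (Finset.card_sdiff_of_subset hRP)
  have hRle : r.toFinset.card ≤ p.toFinset.card := Finset.card_le_card hRP
  have hPpos : 0 < p.toFinset.card :=
    Finset.card_pos.mpr ⟨v, List.mem_toFinset.mpr (mem_cvp_self B F v)⟩
  have hPU : p.toFinset.card ≤ (p.toFinset ∪ q.toFinset).card :=
    Finset.card_le_card Finset.subset_union_left
  have hm : (0:ℝ) < (p.toFinset.card : ℝ) := by exact_mod_cast hPpos
  have hbm : (p.toFinset.card : ℝ) ≤ ((p.toFinset ∪ q.toFinset).card : ℝ) := by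
    exact_mod_cast hPU
  have hb0 : (0:ℝ) < ((p.toFinset ∪ q.toFinset).card : ℝ) := lt_of_lt_of_le hm hbm
  have hakm : ((p.toFinset ∩ q.toFinset).card : ℝ) + (r.toFinset.card : ℝ)
      ≤ (p.toFinset.card : ℝ) := by
    have h5 : (p.toFinset ∩ q.toFinset).card + r.toFinset.card ≤ p.toFinset.card := by omega
    exact_mod_cast h5
  have ha0 : (0:ℝ) ≤ ((p.toFinset ∩ q.toFinset).card : ℝ) := by positivity
  have h1 : ((p.toFinset ∩ q.toFinset).card : ℝ) / ((p.toFinset ∪ q.toFinset).card : ℝ)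
      ≤ ((p.toFinset ∩ q.toFinset).card : ℝ) / (p.toFinset.card : ℝ) :=
    div_le_div_of_nonneg_left ha0 hm hbm
  have h2 : ((p.toFinset ∩ q.toFinset).card : ℝ) / (p.toFinset.card : ℝ)
      ≤ ((p.toFinset.card : ℝ) - (r.toFinset.card : ℝ)) / (p.toFinset.card : ℝ) :=
    (div_le_div_iff_of_pos_right hm).mpr (by linarith)
  have h3 : ((p.toFinset.card : ℝ) - (r.toFinset.card : ℝ)) / (p.toFinset.card : ℝ)
      = 1 - (r.toFinset.card : ℝ) / (p.toFinset.card : ℝ) := by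
    rw [sub_div, div_self hm.ne']
  rw [ge_iff_le, jaccardDist]
  linarith [h1.trans h2]
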